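/- The coefficients β_{2k,2l}^{(n-1)} and β_{2k,2l-1}^{(n-1)} satisfy the component-projection identity β_{2k,2l}^{(n-1)} + β_{2k,2l-1}^{(n-1)} = α_{k,l}^{(n)} for 0 ≤ l ≤ n-k-1 (interpreting β_{2k,-1}^{(n-1)} = 0 for l = 0), where α_{k,l}^{(n)} = C(k+l-1,l)·C(n-k,l)/C(2k+l-1,l). -/

import Mathlib

/-- The coefficients `β_{k,l}^{(n)}` defined piecewise by the parities of `k` and `l`:
`β_{2k,2l} = C(n-k,l)C(k+l-1,l)/C(2k+l-1,l)`, `β_{2k,2l+1} = C(n-k,l)C(k+l,l+1)/C(2k+l,l+1)`,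
`β_{2k+1,2l} = C(n-k,l)C(k+l,l)/C(2k+l,l)`, `β_{2k+1,2l+1} = C(n-k,l+1)C(k+l,l)/C(2k+l+1,l+1)`. -/
def betaCoeff (n k l : ℕ) : ℚ :=
  if k % 2 = 0 then
    let a := k / 2
    if l % 2 = 0 then
      let c := l / 2
      ((n - a).choose c * (a + c - 1).choose c : ℚ) / ((2 * a + c - 1).choose c : ℚ)
    else
      let c := l / 2
      ((n - a).choose c * (a + c).choose (c + 1) : ℚ) / ((2 * a + c).choose (c + 1) : ℚ)
  else
    let a := k / 2
    if l % 2 = 0 then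
      let c := l / 2
      ((n - a).choose c * (a + c).choose c : ℚ) / ((2 * a + c).choose c : ℚ)
    else
      let c := l / 2
      ((n - a).choose (c + 1) * (a + c).choose c : ℚ) / ((2 * a + c + 1).choose (c + 1) : ℚ)

/-- Component-projection identity:
β_{2k,2l}^{(n-1)} + β_{2k,2l-1}^{(n-1)} = α_{k,l}^{(n)} for 0 ≤ l ≤ n-k-1
(with β_{2k,-1}^{(n-1)} interpreted as 0 for l = 0), where
α_{k,l}^{(n)} = C(k+l-1,l)·C(n-k,l)/C(2k+l-1,l). -/
theorem betaCoeff_projection (n k : ℕ) (hn : 1 ≤ n) (hk1 : 1 ≤ k) (hk2 : k ≤ n) :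
    ∀ l : ℕ, l ≤ n - k - 1 →
      betaCoeff (n - 1) (2 * k) (2 * l) +
        (if l = 0 then 0 else betaCoeff (n - 1) (2 * k) (2 * l - 1)) =
      ((k + l - 1).choose l * (n - k).choose l : ℚ) / ((2 * k + l - 1).choose l : ℚ) := by
  intro l hl
  unfold betaCoeff
  rcases l with _ | l
  · norm_num
  · have h1 : l + 1 ≤ n - k - 1 := hl
    have hkn : k + 1 ≤ n := by omega
    have hm : n - 1 - k + 1 = n - k := by omega
    have hmod : (2 * (l + 1)) % 2 = 0 := by omega
    have hdiv : (2 * (l + 1)) / 2 = l + 1 := by omega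
    have hmod2 : (2 * (l + 1) - 1) % 2 = 1 := by omega
    have hdiv2 : (2 * (l + 1) - 1) / 2 = l := by omega
    have e0 : (2 * k) / 2 = k := by omega
    have e1 : k + (l + 1) - 1 = k + l := by omega
    have e2 : 2 * k + (l + 1) - 1 = 2 * k + l := by omega
    simp only [Nat.mul_mod_right, if_pos, hmod, hdiv, hmod2, hdiv2, e0, e1, e2,
      if_neg (Nat.succ_ne_zero l), reduceIte]
    rw [if_neg (one_ne_zero : (1:ℕ) ≠ 0), ← add_div]
    have key : ((n - 1 - k).choose (l + 1) + (n - 1 - k).choose l : ℚ) =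
        (n - k).choose (l + 1) := by
      rw [← hm, Nat.choose_succ_succ']
      push_cast
      ring
    congr 1
    linear_combination ((k + l).choose (l + 1) : ℚ) * key
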